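/- Let n ≥ 4 be an even integer and let β₀ = arctan( sin(π/n) / (1 − cos(π/n)) ). Then for every z ∈ 𝔻, the principal argument of φ_{nL}(z) satisfies |arg φ_{nL}(z)| < β₀. (Consequently S*_{nL} ⊂ SS*(β), the class of strongly starlike functions of order β, for every β ≥ 2β₀/π.) -/

import Mathlib

open Complex Metric Set

/-- The function φ_{nL}(z) = 1 + n z/(n+1) + z^n/(n+1). -/
noncomputable def phinL (n : ℕ) (z : ℂ) : ℂ :=
  1 + (n : ℂ) * z / ((n : ℂ) + 1) + z ^ n / ((n : ℂ) + 1)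

/-- Ω_{nL} = φ_{nL}(𝔻), the image of the open unit disk. -/
def OmeganL (n : ℕ) : Set ℂ := phinL n '' ball (0 : ℂ) 1

/-- f is analytic on the unit disk with f(0) = 0 and f'(0) = 1. -/
def IsNormalizedAnalytic (f : ℂ → ℂ) : Prop :=
  AnalyticOnNhd ℂ f (ball (0 : ℂ) 1) ∧ f 0 = 0 ∧ deriv f 0 = 1

/-- p is subordinate to ψ on the unit disk. -/
def Subord (p ψ : ℂ → ℂ) : Prop :=
  ∃ ω : ℂ → ℂ, AnalyticOnNhd ℂ ω (ball (0 : ℂ) 1) ∧ ω 0 = 0 ∧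
    (∀ z ∈ ball (0 : ℂ) 1, ω z ∈ ball (0 : ℂ) 1) ∧
    (∀ z ∈ ball (0 : ℂ) 1, p z = ψ (ω z))

/-- Membership in the class S*_{nL}. -/
def MemSnL (n : ℕ) (f : ℂ → ℂ) : Prop :=
  IsNormalizedAnalytic f ∧ (∀ z ∈ ball (0 : ℂ) 1, z ≠ 0 → f z ≠ 0) ∧
  Subord (fun z => if z = 0 then 1 else z * deriv f z / f z) (phinL n)


namespace Stmt4Aux
open Real

lemma sin_le_self {x : ℝ} (hx : 0 ≤ x) : Real.sin x ≤ x := by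
  rcases hx.eq_or_lt with h | h
  · simp [← h]
  · exact (Real.sin_lt h).le

lemma cos_ge_poly {x : ℝ} (h0 : 0 ≤ x) (h1 : x ≤ 1) :
    1 - x^2/2 - x^4 * (5/96) ≤ Real.cos x := by
  have hb := Real.cos_bound (x := x) (by rw [_root_.abs_of_nonneg h0]; exact h1)
  rw [abs_le, _root_.abs_of_nonneg h0] at hb
  linarith [hb.1]

lemma cos_le_poly {x : ℝ} (h0 : 0 ≤ x) (h1 : x ≤ 1) :
    Real.cos x ≤ 1 - x^2/2 + x^4 * (5/96) := by
  have hb := Real.cos_bound (x := x) (by rw [_root_.abs_of_nonneg h0]; exact h1)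
  rw [abs_le, _root_.abs_of_nonneg h0] at hb
  linarith [hb.2]

lemma sin_ge_poly {x : ℝ} (h0 : 0 ≤ x) (h1 : x ≤ 1) :
    x - x^3/6 - x^4 * (5/96) ≤ Real.sin x := by
  have hb := Real.sin_bound (x := x) (by rw [_root_.abs_of_nonneg h0]; exact h1)
  rw [abs_le, _root_.abs_of_nonneg h0] at hb
  nlinarith [hb.1, pow_nonneg h0 4, mul_le_mul_of_nonneg_left h1 (pow_nonneg h0 4)]

lemma sin_le_poly {x : ℝ} (h0 : 0 ≤ x) (h1 : x ≤ 1) :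
    Real.sin x ≤ x - x^3/6 + x^4 * (5/96) := by
  have hb := Real.sin_bound (x := x) (by rw [_root_.abs_of_nonneg h0]; exact h1)
  rw [abs_le, _root_.abs_of_nonneg h0] at hb
  nlinarith [hb.2, pow_nonneg h0 4, mul_le_mul_of_nonneg_left h1 (pow_nonneg h0 4)]

/-- core inequality: (21/50)(y - sin y) ≤ 1 - cos y on [0, π/2]. -/
lemma coreL4 {y : ℝ} (h0 : 0 ≤ y) (h2 : y ≤ π/2) :
    (21/50) * (y - Real.sin y) ≤ 1 - Real.cos y := by
  rcases le_or_gt y 1 with hy | hy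
  · have hs := sin_ge_poly h0 hy
    have hc := cos_le_poly h0 hy
    have h3 : y^3 ≤ y^2 := by nlinarith
    have h4 : y^4 ≤ y^2 := by nlinarith
    nlinarith
  · have hπ : y ≤ 1.5708 := by
      have := Real.pi_lt_d6; linarith
    have hs1 : (75:ℝ)/96 ≤ Real.sin 1 := by
      have := sin_ge_poly (x := 1) (by norm_num) (by norm_num); linarith
    have hsy : Real.sin 1 ≤ Real.sin y := by
      rcases eq_or_lt_of_le hy.le with h | h
      · rw [h]
      · exact (Real.sin_lt_sin_of_lt_of_le_pi_div_two (by linarith [Real.pi_pos]) h2 h).le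
    have hc1 : Real.cos 1 ≤ (53:ℝ)/96 := by
      have := cos_le_poly (x := 1) (by norm_num) (by norm_num); linarith
    have hcy : Real.cos y ≤ Real.cos 1 := by
      apply Real.cos_le_cos_of_nonneg_of_le_pi (by norm_num)
        (by linarith [Real.pi_gt_three]) hy.le
    nlinarith

/-- tan(α) ≤ 21/50 for α ∈ [0, 0.3927]. -/
lemma tan8 {α : ℝ} (h0 : 0 ≤ α) (h1 : α ≤ 0.3927) :
    Real.sin α ≤ (21/50) * Real.cos α := by
  have hs := sin_le_poly h0 (by linarith)
  have hc := cos_ge_poly h0 (by linarith)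
  nlinarith [sq_nonneg α, sq_nonneg (α - 0.3927), sq_nonneg (α*α), mul_nonneg h0 h0]

/-- sin(n v) ≤ n sin v for small v ≥ 0. -/
lemma sin_nat_mul_le {n : ℕ} (hn : 4 ≤ n) {v : ℝ} (hv : 0 ≤ v)
    (hnv : (n:ℝ) * v ≤ 1/2) : Real.sin ((n:ℝ)*v) ≤ (n:ℝ) * Real.sin v := by
  have hN : (4:ℝ) ≤ (n:ℝ) := by exact_mod_cast hn
  have hv1 : v ≤ 1 := by nlinarith
  have hnv1 : (n:ℝ)*v ≤ 1 := by linarith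
  have hnv0 : 0 ≤ (n:ℝ)*v := by positivity
  have hs1 := sin_le_poly hnv0 hnv1
  have hs2 := sin_ge_poly hv hv1
  have key : (n:ℝ)*v - ((n:ℝ)*v)^3/6 + ((n:ℝ)*v)^4*(5/96)
      ≤ (n:ℝ) * (v - v^3/6 - v^4*(5/96)) := by
    have h1 : ((n:ℝ)^3 - (n:ℝ)) * v^3 / 6 ≥ (5/96) * (((n:ℝ)^4 + (n:ℝ)) * v^4) := by
      have hv3 : (0:ℝ) ≤ v^3 := by positivity
      have ha : (n:ℝ)^4 * v^4 ≤ (1/2) * ((n:ℝ)^3 * v^3) := by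
        nlinarith [mul_le_mul_of_nonneg_left hnv (show (0:ℝ) ≤ (n:ℝ)^3*v^3 by positivity)]
      have hb2 : (n:ℝ) * v^4 ≤ (1/2) * v^3 := by
        nlinarith [mul_le_mul_of_nonneg_left hnv hv3]
      have hc3 : 16*(n:ℝ) ≤ (n:ℝ)^3 := by
        nlinarith [mul_le_mul_of_nonneg_left (show (16:ℝ) ≤ (n:ℝ)^2 by nlinarith)
          (show (0:ℝ) ≤ (n:ℝ) by linarith)]
      have hd : (0:ℝ) ≤ v^3 * (27*(n:ℝ)^3 - 32*(n:ℝ) - 5) :=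
        mul_nonneg hv3 (by nlinarith)
      nlinarith
    nlinarith
  calc Real.sin ((n:ℝ)*v) ≤ (n:ℝ)*v - ((n:ℝ)*v)^3/6 + ((n:ℝ)*v)^4*(5/96) := hs1
    _ ≤ (n:ℝ) * (v - v^3/6 - v^4*(5/96)) := key
    _ ≤ (n:ℝ) * Real.sin v := by nlinarith

end Stmt4Aux
namespace Stmt4Aux
open Real

lemma basicBounds {N a : ℝ} (hN : 4 ≤ N) (ha0 : 0 ≤ a) (haN : a*N ≤ 1.5708) :
    a ≤ 0.3927 ∧ a^2 ≤ 0.15422 ∧ a^2*N^2 ≤ 2.46742 ∧ a^4 ≤ 0.15422*a^2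
      ∧ N*a^2 ≤ 0.61686 := by
  have hN0 : (0:ℝ) ≤ N := by linarith
  have h1 : a ≤ 0.3927 := by nlinarith [mul_le_mul_of_nonneg_left hN ha0]
  have h2 : a^2 ≤ 0.15422 := by nlinarith [mul_le_mul h1 h1 ha0 (by norm_num : (0:ℝ) ≤ 0.3927)]
  have h3 : a^2*N^2 ≤ 2.46742 := by
    nlinarith [mul_le_mul haN haN (mul_nonneg ha0 hN0) (by norm_num : (0:ℝ) ≤ 1.5708)]
  have h4 : a^4 ≤ 0.15422*a^2 := by nlinarith [mul_le_mul_of_nonneg_left h2 (sq_nonneg a)]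
  have h5 : N*a^2 ≤ 0.61686 := by
    nlinarith [mul_le_mul_of_nonneg_right hN (mul_nonneg hN0 (sq_nonneg a))]
  exact ⟨h1, h2, h3, h4, h5⟩

/-- arithmetic: N ≤ (N+1)·cosα. -/
lemma arithL1 {N a c : ℝ} (hN : 4 ≤ N) (ha0 : 0 ≤ a) (haN : a*N ≤ 1.5708)
    (hc : 1 - a^2/2 - a^4*(5/96) ≤ c) : N ≤ (N+1)*c := by
  obtain ⟨h1, h2, h3, h4, h5⟩ := basicBounds hN ha0 haN
  have h6 : 1 - 0.50804*a^2 ≤ c := by linarith [sq_nonneg a]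
  nlinarith [mul_le_mul_of_nonneg_left h6 (show (0:ℝ) ≤ N+1 by linarith)]

set_option maxHeartbeats 1000000 in
/-- arithmetic for the far region. -/
lemma arithFar {N a d ca cd s : ℝ} (hN : 4 ≤ N) (ha0 : 0 ≤ a) (haN : a*N ≤ 1.5708)
    (hd0 : 0 ≤ d) (hd1 : d ≤ 1) (hd2 : 2 ≤ d*N)
    (hcd : cd ≤ 1 - d^2/2 + d^4*(5/96))
    (hca : 1 - a^2/2 - a^4*(5/96) ≤ ca) (hs : -1 ≤ s) :
    0 ≤ (N+1)*ca - N*cd + s := by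
  obtain ⟨h1, h2, h3, h4, h5⟩ := basicBounds hN ha0 haN
  have hNpos : (0:ℝ) < N := by linarith
  have hd4 : d^4 ≤ d^2 := by nlinarith [mul_nonneg (mul_nonneg hd0 hd0) hd0, sq_nonneg d]
  have e1 : (43/96)*d^2 ≤ 1 - cd := by linarith
  have e2 : 4 ≤ d^2*N^2 := by
    nlinarith [mul_le_mul hd2 hd2 (by norm_num : (0:ℝ) ≤ 2) (mul_nonneg hd0 hNpos.le)]
  have e1' := mul_le_mul_of_nonneg_left e1 (show (0:ℝ) ≤ N^2 by positivity)
  have e3 : (43:ℝ)/24 ≤ N^2*(1 - cd) := by nlinarith [e1', e2]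
  have e4 : 1 - ca ≤ 0.50804*a^2 := by linarith [sq_nonneg a]
  have e4a := mul_le_mul_of_nonneg_left e4 (show (0:ℝ) ≤ N^2 by positivity)
  have e4b := mul_le_mul_of_nonneg_left e4 (show (0:ℝ) ≤ N by linarith)
  have e7 : N^2*(1-ca) + N*(1-ca) ≤ 1.5670 := by linarith [e4a, e4b, h3, h5]
  have e8 : -N ≤ N*s := by nlinarith [mul_le_mul_of_nonneg_left hs (show (0:ℝ) ≤ N by linarith)]
  nlinarith [e3, e7, hNpos, e8]

end Stmt4Aux
namespace Stmt4Aux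
open Real

lemma tightIneq {N ca sa cu su cy sy u y : ℝ} (hN : 0 < N)
    (hyu : y = N*u) (hu0 : 0 ≤ u) (hsu : su ≤ u) (hcu : cu ≤ 1)
    (hsy : sy ≤ y) (hcy : cy ≤ 1)
    (hca : 0 < ca) (hsa : 0 ≤ sa) (htan : sa ≤ (21/50)*ca)
    (hcore : (21/50)*(y - sy) ≤ 1 - cy) :
    0 ≤ ca*((N+1) - N*cu - cy) - sa*(N*su - sy) := by
  have hB2 : N*su - sy ≤ y - sy := by
    nlinarith [mul_le_mul_of_nonneg_left hsu hN.le]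
  have hy_sy : 0 ≤ y - sy := by linarith
  have hB1 : 1 - cy ≤ (N+1) - N*cu - cy := by
    nlinarith [mul_le_mul_of_nonneg_left hcu hN.le]
  rcases le_or_gt (N*su - sy) 0 with h | h
  · have h1 : sa*(N*su - sy) ≤ 0 := mul_nonpos_of_nonneg_of_nonpos hsa h
    have h2 : 0 ≤ ca*((N+1) - N*cu - cy) :=
      mul_nonneg hca.le (by linarith)
    linarith
  · have c1 : sa*(N*su - sy) ≤ (21/50)*ca*(N*su - sy) :=
      mul_le_mul_of_nonneg_right htan h.le
    have c2 : (21/50)*ca*(N*su - sy) ≤ (21/50)*ca*(y - sy) := by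
      have := mul_le_mul_of_nonneg_left hB2 (show (0:ℝ) ≤ (21/50)*ca by positivity)
      linarith
    have c4 : ca*((21/50)*(y-sy)) ≤ ca*(1-cy) := mul_le_mul_of_nonneg_left hcore hca.le
    have c5 : ca*(1-cy) ≤ ca*((N+1) - N*cu - cy) := mul_le_mul_of_nonneg_left hB1 hca.le
    nlinarith [c1, c2, c4, c5]

set_option maxHeartbeats 1000000 in
lemma key3 (n : ℕ) (hn : 4 ≤ n) (hne : Even n) (θ : ℝ) :
    0 ≤ ((n:ℝ)+1) * Real.cos (π/(2*(n:ℝ))) + (n:ℝ) * Real.cos θ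
        + Real.sin ((n:ℝ)*θ + π/(2*(n:ℝ))) := by
  have hN : (4:ℝ) ≤ (n:ℝ) := by exact_mod_cast hn
  have hNpos : (0:ℝ) < (n:ℝ) := by linarith
  set α : ℝ := π/(2*(n:ℝ)) with hαdef
  clear_value α
  have hNα : (n:ℝ) * α = π/2 := by rw [hαdef]; field_simp
  have hπlt : π < 3.1416 := by have := Real.pi_lt_d6; linarith
  have hπgt : 3.1415 < π := by have := Real.pi_gt_d6; linarith
  have hα0 : 0 < α := by rw [hαdef]; positivity
  have haN : α * (n:ℝ) ≤ 1.5708 := by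
    rw [mul_comm, hNα]; linarith
  have hα3927 : α ≤ 0.3927 := (basicBounds hN hα0.le haN).1
  have hα1 : α ≤ 1 := by linarith
  have hcosα_ge := cos_ge_poly hα0.le hα1
  have hsinα0 : 0 ≤ Real.sin α := Real.sin_nonneg_of_nonneg_of_le_pi hα0.le (by linarith)
  have hcosα0 : 0 < Real.cos α := by
    obtain ⟨_, h2, _, h4, _⟩ := basicBounds hN hα0.le haN
    nlinarith
  have hL1 : (n:ℝ) ≤ ((n:ℝ)+1) * Real.cos α := arithL1 hN hα0.le haN hcosα_ge
  have htan : Real.sin α ≤ (21/50) * Real.cos α := tan8 hα0.le hα3927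
  -- periodic reduction
  set k : ℤ := round ((θ - π) / (2 * π)) with hk
  set δ : ℝ := θ - π - (k:ℝ) * (2 * π) with hδdef
  clear_value δ
  have hδπ : |δ| ≤ π := by
    have h1 := abs_sub_round ((θ - π) / (2 * π))
    have h2π : (0:ℝ) < 2*π := by linarith
    have h3 : δ = ((θ - π)/(2*π) - (k:ℝ)) * (2*π) := by
      rw [hδdef]; field_simp
    rw [h3, abs_mul, abs_of_pos h2π]
    calc |(θ-π)/(2*π) - (k:ℝ)| * (2*π) ≤ (1/2)*(2*π) :=
          mul_le_mul_of_nonneg_right h1 h2π.le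
      _ = π := by ring
  have hθeq : θ = (π + δ) + (k:ℝ) * (2 * π) := by rw [hδdef]; ring
  have hcosθ : Real.cos θ = - Real.cos δ := by
    rw [hθeq, Real.cos_add_int_mul_two_pi, Real.cos_add]; simp
  have hsinθ : Real.sin ((n:ℝ)*θ + α) = Real.sin ((n:ℝ)*δ + α) := by
    obtain ⟨m, hm⟩ := hne
    have he : (n:ℝ)*θ + α = (((n:ℝ)*δ + α)) + ((m : ℤ) + (n:ℤ)*k : ℤ) * (2*π) := by
      rw [hθeq]; push_cast [hm]; ring
    rw [he, Real.sin_add_int_mul_two_pi]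
  rw [hcosθ, hsinθ]
  rcases le_or_gt 0 (Real.sin ((n:ℝ)*δ + α)) with hpos | hneg
  · have := mul_le_mul_of_nonneg_left (Real.cos_le_one δ) hNpos.le
    linarith
  rcases le_or_gt (1/(n:ℝ)) (1 - Real.cos δ) with hfar1 | hnear1
  · have hs := Real.neg_one_le_sin ((n:ℝ)*δ + α)
    have h1 : 1 ≤ (n:ℝ)*(1 - Real.cos δ) := by
      have := mul_le_mul_of_nonneg_left hfar1 hNpos.le
      rwa [mul_one_div, div_self hNpos.ne'] at this
    linarith
  have hδ1 : |δ| ≤ 1 := by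
    by_contra hcon; push_neg at hcon
    have h2 : Real.cos |δ| ≤ Real.cos 1 :=
      Real.cos_le_cos_of_nonneg_of_le_pi (by norm_num) hδπ hcon.le
    have h3 : Real.cos 1 ≤ 53/96 := by
      have := cos_le_poly (x := 1) (by norm_num) (le_refl 1); linarith
    rw [Real.cos_abs] at h2
    have h14 : (1:ℝ)/(n:ℝ) ≤ 1/4 := by
      rw [div_le_div_iff₀ hNpos (by norm_num)]; linarith
    linarith
  rcases le_or_gt (2/(n:ℝ)) |δ| with hfar2 | hnear2
  · have hcd : Real.cos δ ≤ 1 - |δ|^2/2 + |δ|^4*(5/96) := by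
      rw [← Real.cos_abs]; exact cos_le_poly (abs_nonneg δ) hδ1
    have hdN : 2 ≤ |δ| * (n:ℝ) := (div_le_iff₀ hNpos).mp hfar2
    have := arithFar hN hα0.le haN (abs_nonneg δ) hδ1 hdN hcd hcosα_ge
      (Real.neg_one_le_sin ((n:ℝ)*δ + α))
    linarith
  have hδneg : δ < 0 := by
    by_contra hcon; push_neg at hcon
    apply absurd hneg; push_neg
    apply Real.sin_nonneg_of_nonneg_of_le_pi
    · have := mul_nonneg hNpos.le hcon; linarith
    · have h1 : δ*(n:ℝ) < 2 := by
        rw [_root_.abs_of_nonneg hcon] at hnear2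
        exact (lt_div_iff₀ hNpos).mp hnear2
      nlinarith
  rcases lt_or_ge (-α) δ with hC2 | hC3
  · -- tight branch
    set u : ℝ := δ + α with hu
    clear_value u
    have hu0 : 0 < u := by linarith
    have huα : u ≤ α := by linarith
    have hy2 : (n:ℝ)*u ≤ π/2 := by
      have := mul_le_mul_of_nonneg_left huα hNpos.le
      linarith [hNα]
    have hNu : (n:ℝ)*u = (n:ℝ)*δ + π/2 := by rw [hu, mul_add, hNα]
    have hsin2 : Real.sin ((n:ℝ)*δ + α) = -Real.cos ((n:ℝ)*u + α) := by
      have h : (n:ℝ)*δ + α = ((n:ℝ)*u + α) - π/2 := by linarith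
      rw [h, Real.sin_sub_pi_div_two]
    have hcosδ2 : Real.cos δ = Real.cos u * Real.cos α + Real.sin u * Real.sin α := by
      have h : δ = u - α := by rw [hu]; ring
      rw [h, Real.cos_sub]
    rw [hsin2, hcosδ2, Real.cos_add]
    have hcore := coreL4 (y := (n:ℝ)*u) (by positivity) hy2
    have := tightIneq hNpos rfl hu0.le (sin_le_self hu0.le) (Real.cos_le_one u)
      (sin_le_self (by positivity)) (Real.cos_le_one ((n:ℝ)*u)) hcosα0 hsinα0 htan hcore
    linarith [this]
  · -- easy negative branch
    set v : ℝ := -δ - α with hv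
    clear_value v
    have hv0 : 0 ≤ v := by linarith
    have hNv : (n:ℝ)*v = (-δ)*(n:ℝ) - π/2 := by
      rw [hv]; linear_combination (-1 : ℝ) * hNα
    have hvN : (n:ℝ)*v ≤ 1/2 := by
      have h1 : -δ < 2/(n:ℝ) := by rwa [_root_.abs_of_neg hδneg] at hnear2
      have h2 : -δ*(n:ℝ) < 2 := (lt_div_iff₀ hNpos).mp h1
      rw [hNv]; linarith
    have hsin3 : Real.sin ((n:ℝ)*δ + α) = -Real.cos (α - (n:ℝ)*v) := by
      have h : (n:ℝ)*δ + α = (α - (n:ℝ)*v) - π/2 := by rw [hNv]; ring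
      rw [h, Real.sin_sub_pi_div_two]
    have hcosδ3 : Real.cos δ = Real.cos α * Real.cos v - Real.sin α * Real.sin v := by
      have h : δ = -(α + v) := by rw [hv]; ring
      rw [h, Real.cos_neg, Real.cos_add]
    rw [hsin3, hcosδ3, Real.cos_sub]
    have hB2 := sin_nat_mul_le hn hv0 hvN
    have hB1a := mul_le_mul_of_nonneg_left (Real.cos_le_one v) hNpos.le
    have hB1b := Real.cos_le_one ((n:ℝ)*v)
    have p1 : 0 ≤ Real.cos α * ((n:ℝ)+1 - (n:ℝ)*Real.cos v - Real.cos ((n:ℝ)*v)) :=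
      mul_nonneg hcosα0.le (by linarith)
    have p2 : 0 ≤ Real.sin α * ((n:ℝ)*Real.sin v - Real.sin ((n:ℝ)*v)) :=
      mul_nonneg hsinα0 (by linarith)
    linarith [p1, p2]

end Stmt4Aux
namespace Stmt4Aux
open Real

/-- Strict positivity inside the disk. -/
lemma keyR (n : ℕ) (hn : 4 ≤ n) (hne : Even n) {r : ℝ} (hr0 : 0 ≤ r) (hr1 : r < 1)
    (t : ℝ) :
    0 < ((n:ℝ)+1) * Real.cos (π/(2*(n:ℝ))) + (n:ℝ) * r * Real.cos (t + π/(2*(n:ℝ)))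
      + r^n * Real.cos ((n:ℝ)*t + π/(2*(n:ℝ))) := by
  have hN : (4:ℝ) ≤ (n:ℝ) := by exact_mod_cast hn
  have hNpos : (0:ℝ) < (n:ℝ) := by linarith
  set α : ℝ := π/(2*(n:ℝ)) with hαdef
  clear_value α
  have hNα : (n:ℝ) * α = π/2 := by rw [hαdef]; field_simp
  have hπlt : π < 3.1416 := by have := Real.pi_lt_d6; linarith
  have hα0 : 0 < α := by rw [hαdef]; positivity
  have haN : α * (n:ℝ) ≤ 1.5708 := by rw [mul_comm, hNα]; linarith
  have hα1 : α ≤ 1 := by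
    have := (basicBounds hN hα0.le haN).1; linarith
  have hcosα_ge := cos_ge_poly hα0.le hα1
  have hL1 : (n:ℝ) ≤ ((n:ℝ)+1) * Real.cos α := arithL1 hN hα0.le haN hcosα_ge
  have hrn0 : 0 ≤ r^n := by positivity
  have hrn1 : r^n < 1 := pow_lt_one₀ hr0 hr1 (by omega)
  have hrnc : r^n * Real.cos ((n:ℝ)*t + α) ≥ -(r^n) := by
    nlinarith [Real.neg_one_le_cos ((n:ℝ)*t + α)]
  rcases le_or_gt 0 (Real.cos (t + α)) with hc1 | hc1
  · have h1 : 0 ≤ (n:ℝ)*r*Real.cos (t + α) := by positivity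
    nlinarith
  · -- cos(t+α) < 0 : n r cos > n cos
    have h2 : (n:ℝ)*Real.cos (t+α) < (n:ℝ)*r*Real.cos (t+α) := by
      have := mul_lt_mul_of_neg_right hr1 hc1  -- r*cos < 1*cos
      nlinarith
    rcases le_or_gt 0 (Real.cos ((n:ℝ)*t + α)) with hc2 | hc2
    · have h3 : 0 ≤ r^n * Real.cos ((n:ℝ)*t + α) := by positivity
      have h4 : 0 ≤ (n:ℝ) + (n:ℝ)*Real.cos (t+α) := by
        nlinarith [Real.neg_one_le_cos (t+α)]
      nlinarith
    · have h3 : Real.cos ((n:ℝ)*t + α) ≤ r^n * Real.cos ((n:ℝ)*t + α) := by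
        nlinarith
      have hkey := key3 n hn hne (t + α)
      rw [← hαdef] at hkey
      have hsin : Real.sin ((n:ℝ)*(t+α) + α) = Real.cos ((n:ℝ)*t + α) := by
        have h : (n:ℝ)*(t+α) + α = ((n:ℝ)*t + α) + π/2 := by
          rw [mul_add, hNα]; ring
        rw [h, Real.sin_add_pi_div_two]
      rw [hsin] at hkey
      linarith
end Stmt4Aux
namespace Stmt4Aux
open Real

lemma re_formula (n : ℕ) (σ t r : ℝ) :
    (Complex.exp ((σ:ℂ) * Complex.I) *
      (((n:ℂ)+1) + (n:ℂ) * ((r:ℂ) * Complex.exp ((t:ℂ) * Complex.I))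
        + ((r:ℂ) * Complex.exp ((t:ℂ) * Complex.I))^n)).re
    = ((n:ℝ)+1) * Real.cos σ + (n:ℝ) * r * Real.cos (t + σ)
      + r^n * Real.cos ((n:ℝ)*t + σ) := by
  have e1 : Complex.exp ((σ:ℂ) * Complex.I) * ((n:ℂ)+1)
      = (((n:ℝ)+1 : ℝ) : ℂ) * Complex.exp ((σ:ℂ) * Complex.I) := by push_cast; ring
  have e2 : Complex.exp ((σ:ℂ) * Complex.I) * ((n:ℂ) * ((r:ℂ) * Complex.exp ((t:ℂ) * Complex.I)))
      = (((n:ℝ)*r : ℝ) : ℂ) * Complex.exp (((t + σ : ℝ) : ℂ) * Complex.I) := by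
    rw [Complex.ofReal_add, add_mul, Complex.exp_add]; push_cast; ring
  have e3 : Complex.exp ((σ:ℂ) * Complex.I) * (((r:ℂ) * Complex.exp ((t:ℂ) * Complex.I))^n)
      = ((r^n : ℝ) : ℂ) * Complex.exp ((((n:ℝ)*t + σ : ℝ) : ℂ) * Complex.I) := by
    rw [mul_pow, ← Complex.exp_nat_mul, Complex.ofReal_add, add_mul, Complex.exp_add]
    push_cast; ring_nf
  rw [mul_add, mul_add, e1, e2, e3, Complex.add_re, Complex.add_re,
    Complex.re_ofReal_mul, Complex.re_ofReal_mul, Complex.re_ofReal_mul,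
    Complex.exp_ofReal_mul_I_re, Complex.exp_ofReal_mul_I_re, Complex.exp_ofReal_mul_I_re]

lemma re_exp_mul_pos (n : ℕ) (hn : 4 ≤ n) (hne : Even n) {z : ℂ}
    (hz : z ∈ Metric.ball (0:ℂ) 1) {σ : ℝ}
    (hσ : σ = π/(2*(n:ℝ)) ∨ σ = -(π/(2*(n:ℝ)))) :
    0 < (Complex.exp ((σ:ℂ) * Complex.I) * phinL n z).re := by
  have hN : (4:ℝ) ≤ (n:ℝ) := by exact_mod_cast hn
  have hn1 : ((n:ℂ)+1) ≠ 0 := Nat.cast_add_one_ne_zero n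
  have hzeq : ((‖z‖ : ℝ) : ℂ) * Complex.exp ((z.arg : ℂ) * Complex.I) = z :=
    Complex.norm_mul_exp_arg_mul_I z
  have hr1 : ‖z‖ < 1 := by
    simpa [Metric.mem_ball, Complex.dist_eq] using hz
  have hr0 : 0 ≤ ‖z‖ := norm_nonneg z
  have hcast : ((n:ℂ)+1) = (((n:ℝ)+1 : ℝ) : ℂ) := by push_cast; ring
  have hmul : Complex.exp ((σ:ℂ) * Complex.I) * (((n:ℂ)+1) + (n:ℂ)*z + z^n)
      = ((n:ℂ)+1) * (Complex.exp ((σ:ℂ) * Complex.I) * phinL n z) := by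
    unfold phinL; field_simp
  have hre : (Complex.exp ((σ:ℂ) * Complex.I) * (((n:ℂ)+1) + (n:ℂ)*z + z^n)).re
      = ((n:ℝ)+1) * (Complex.exp ((σ:ℂ) * Complex.I) * phinL n z).re := by
    rw [hmul, hcast, Complex.re_ofReal_mul]
  have hpos : 0 < (Complex.exp ((σ:ℂ) * Complex.I) * (((n:ℂ)+1) + (n:ℂ)*z + z^n)).re := by
    rw [← hzeq, re_formula]
    rcases hσ with h | h
    · rw [h]
      exact keyR n hn hne hr0 hr1 z.arg
    · rw [h]
      have e1 : Real.cos (-(π/(2*(n:ℝ)))) = Real.cos (π/(2*(n:ℝ))) := Real.cos_neg _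
      have e2 : Real.cos (z.arg + -(π/(2*(n:ℝ)))) = Real.cos ((-z.arg) + π/(2*(n:ℝ))) := by
        rw [← Real.cos_neg]; ring_nf
      have e3 : Real.cos ((n:ℝ)*z.arg + -(π/(2*(n:ℝ))))
          = Real.cos ((n:ℝ)*(-z.arg) + π/(2*(n:ℝ))) := by
        rw [← Real.cos_neg]; ring_nf
      rw [e1, e2, e3]
      exact keyR n hn hne hr0 hr1 (-z.arg)
  rw [hre] at hpos
  nlinarith [hpos]

end Stmt4Aux
namespace Stmt4Aux
open Real

lemma abs_arg_lt {w : ℂ} {α : ℝ} (hα0 : 0 < α) (hα1 : α ≤ π/8)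
    (h1 : 0 < (Complex.exp ((α:ℂ) * Complex.I) * w).re)
    (h2 : 0 < (Complex.exp (((-α : ℝ):ℂ) * Complex.I) * w).re) :
    |w.arg| < π/2 - α := by
  have hπ : 0 < π := Real.pi_pos
  have hw : w ≠ 0 := by
    intro h; rw [h, mul_zero] at h1; simp at h1
  have hR : 0 < ‖w‖ := norm_pos_iff.mpr hw
  set θ : ℝ := w.arg with hθ
  have hθlb : -π < θ := Complex.neg_pi_lt_arg w
  have hθub : θ ≤ π := Complex.arg_le_pi w
  have hre : ∀ σ : ℝ, (Complex.exp ((σ:ℂ) * Complex.I) * w).re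
      = ‖w‖ * Real.cos (θ + σ) := by
    intro σ
    conv_lhs => rw [← Complex.norm_mul_exp_arg_mul_I w]
    have e : Complex.exp ((σ:ℂ) * Complex.I) *
        (((‖w‖ : ℝ):ℂ) * Complex.exp ((w.arg:ℂ) * Complex.I))
        = ((‖w‖ : ℝ):ℂ) * Complex.exp (((θ + σ : ℝ):ℂ) * Complex.I) := by
      rw [Complex.ofReal_add, add_mul, Complex.exp_add, hθ]; ring
    rw [e, Complex.re_ofReal_mul, Complex.exp_ofReal_mul_I_re]
  rw [hre] at h1 h2
  have hc1 : 0 < Real.cos (θ + α) := by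
    by_contra h; push_neg at h; nlinarith
  have hc2 : 0 < Real.cos (θ + -α) := by
    by_contra h; push_neg at h; nlinarith
  have hcosθ : 0 < Real.cos θ := by
    have hadd : Real.cos (θ + α) + Real.cos (θ + -α) = 2 * Real.cos θ * Real.cos α := by
      rw [Real.cos_add, Real.cos_add, Real.cos_neg, Real.sin_neg]; ring
    have hca : 0 < Real.cos α := Real.cos_pos_of_mem_Ioo ⟨by linarith, by linarith⟩
    nlinarith
  have hθ2 : |θ| < π/2 := by
    by_contra h; push_neg at h
    have h3 : Real.cos |θ| ≤ 0 :=
      Real.cos_nonpos_of_pi_div_two_le_of_le h (by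
        rcases abs_cases θ with ⟨he, _⟩ | ⟨he, _⟩ <;> nlinarith)
    rw [Real.cos_abs] at h3; linarith
  rw [abs_lt] at hθ2 ⊢
  constructor
  · -- -(π/2 - α) < θ
    by_contra h; push_neg at h
    have h4 : Real.cos (θ + -α) ≤ 0 := by
      have e : Real.cos (θ + -α) = Real.cos (-(θ + -α)) := (Real.cos_neg _).symm
      rw [e]
      apply Real.cos_nonpos_of_pi_div_two_le_of_le (by linarith)
      nlinarith
    linarith
  · by_contra h; push_neg at h
    have h4 : Real.cos (θ + α) ≤ 0 := by
      apply Real.cos_nonpos_of_pi_div_two_le_of_le (by linarith)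
      nlinarith
    linarith

lemma arctan_val (n : ℕ) (hn : 4 ≤ n) :
    Real.arctan (Real.sin (π/(n:ℝ)) / (1 - Real.cos (π/(n:ℝ)))) = π/2 - π/(2*(n:ℝ)) := by
  have hN : (4:ℝ) ≤ (n:ℝ) := by exact_mod_cast hn
  have hNpos : (0:ℝ) < (n:ℝ) := by linarith
  have hπ : 0 < π := Real.pi_pos
  set x : ℝ := π/(2*(n:ℝ)) with hx
  have hx0 : 0 < x := by rw [hx]; positivity
  have hx2 : x < π/2 := by
    rw [hx, div_lt_div_iff₀ (by positivity) (by norm_num)]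
    nlinarith
  have h2x : π/(n:ℝ) = 2*x := by rw [hx]; field_simp
  have hsx : 0 < Real.sin x := Real.sin_pos_of_pos_of_lt_pi hx0 (by linarith)
  have hcx : 0 < Real.cos x := Real.cos_pos_of_mem_Ioo ⟨by linarith, hx2⟩
  have hs2 : Real.sin (2*x) = 2 * Real.sin x * Real.cos x := Real.sin_two_mul x
  have hc2 : 1 - Real.cos (2*x) = 2 * Real.sin x ^ 2 := by
    rw [Real.cos_two_mul]
    have := Real.sin_sq_add_cos_sq x
    nlinarith
  have hratio : Real.sin (π/(n:ℝ)) / (1 - Real.cos (π/(n:ℝ))) = Real.tan (π/2 - x) := by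
    rw [h2x, hs2, hc2, Real.tan_eq_sin_div_cos, Real.sin_pi_div_two_sub, Real.cos_pi_div_two_sub]
    rw [div_eq_div_iff (by positivity : (0:ℝ) < 2*Real.sin x^2).ne' hsx.ne']
    ring
  rw [hratio, Real.arctan_tan (by linarith) (by linarith)]

end Stmt4Aux

theorem stmt4 (n : ℕ) (hn : 4 ≤ n) (hne : Even n) :
    ∀ z ∈ ball (0 : ℂ) 1,
      |(phinL n z).arg| <
        Real.arctan (Real.sin (Real.pi / n) / (1 - Real.cos (Real.pi / n))) := by
  intro z hz
  have hN : (4:ℝ) ≤ (n:ℝ) := by exact_mod_cast hn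
  have hπ : 0 < Real.pi := Real.pi_pos
  have hα0 : 0 < Real.pi/(2*(n:ℝ)) := by positivity
  have hα1 : Real.pi/(2*(n:ℝ)) ≤ Real.pi/8 := by
    rw [div_le_div_iff₀ (by positivity) (by norm_num)]
    nlinarith
  have h1 := Stmt4Aux.re_exp_mul_pos n hn hne hz (Or.inl rfl)
  have h2 := Stmt4Aux.re_exp_mul_pos n hn hne hz (Or.inr rfl)
  have h3 := Stmt4Aux.abs_arg_lt hα0 hα1 h1 h2
  rw [Stmt4Aux.arctan_val n hn]
  exact h3
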